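/- (Lemma: 2-cycles nested inside 4-cycles.) Let n ≥ 1, let A ∈ ℝ^{n×n} be Monge, let B ∈ ℝ^{n×n} be Anti-Monge, and let 0 ≤ k ≤ n. Then there exists an optimal solution (σ, π) of RecovAP (feasible with minimum cost among all feasible pairs) such that (σ, π) consists only of 2-cycles and 4-cycles, every 4-cycle is aligned, every two distinct 4-cycles are nested, and every 2-cycle is nested inside every 4-cycle: for every index x with σ(x) = π(x) and every orbit {i, i'} of σ⁻¹∘π with i < i', one has i < x < i' and σ(i) < σ(x) < σ(i'). -/

import Mathlib

open Finset Equiv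

namespace RecovAPAux

variable {n : ℕ}

def Cost (A B : Fin n → Fin n → ℝ) (σ π : Equiv.Perm (Fin n)) : ℝ :=
  (∑ i, A i (σ i)) + (∑ i, B i (π i))

def Agr (σ π : Equiv.Perm (Fin n)) : ℕ :=
  (Finset.univ.filter fun i : Fin n => σ i = π i).card

def Phi (σ π : Equiv.Perm (Fin n)) : ℤ :=
  ∑ h : Fin n, (h.val : ℤ) * (((π h).val : ℤ) - ((σ h).val : ℤ))

def IsMin (A B : Fin n → Fin n → ℝ) (σ π : Equiv.Perm (Fin n)) : Prop :=
  ∀ σ' π' : Equiv.Perm (Fin n), Cost A B σ' π' ≤ Cost A B σ π →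
    Agr σ π ≤ Agr σ' π' → Phi σ' π' < Phi σ π → False

lemma sum_sub_eq {M : Type*} [AddCommGroup M] (f g : Fin n → M) (s : Finset (Fin n))
    (h : ∀ i ∉ s, f i = g i) :
    (∑ i, f i) - (∑ i, g i) = ∑ i ∈ s, (f i - g i) := by
  rw [← Finset.sum_sub_distrib]
  refine (Finset.sum_subset (Finset.subset_univ s) ?_).symm
  intro i _ hi; rw [h i hi, sub_self]

lemma sum_sub_eq_two {M : Type*} [AddCommGroup M] (f g : Fin n → M) (a b : Fin n)
    (hab : a ≠ b) (h : ∀ i, i ≠ a → i ≠ b → f i = g i) :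
    (∑ i, f i) - (∑ i, g i) = (f a - g a) + (f b - g b) := by
  rw [sum_sub_eq f g {a, b} (fun x hx => by
    simp only [Finset.mem_insert, Finset.mem_singleton] at hx
    push_neg at hx
    exact h x hx.1 hx.2), Finset.sum_pair hab]

lemma sum_sub_eq_three {M : Type*} [AddCommGroup M] (f g : Fin n → M) (a b c : Fin n)
    (hab : a ≠ b) (hac : a ≠ c) (hbc : b ≠ c) (h : ∀ i, i ≠ a → i ≠ b → i ≠ c → f i = g i) :
    (∑ i, f i) - (∑ i, g i) = (f a - g a) + ((f b - g b) + (f c - g c)) := by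
  rw [sum_sub_eq f g {a, b, c} (fun x hx => by
    simp only [Finset.mem_insert, Finset.mem_singleton] at hx
    push_neg at hx
    exact h x hx.1 hx.2.1 hx.2.2)]
  rw [Finset.sum_insert (by simp [hab, hac]), Finset.sum_pair hbc]

/-- a strictly monotone self-map of a finite set is the identity -/
lemma strictMonoOn_self_id (s : Finset (Fin n)) (g : Fin n → Fin n)
    (hmono : ∀ a ∈ s, ∀ b ∈ s, a < b → g a < g b) (hmaps : ∀ a ∈ s, g a ∈ s) :
    ∀ a ∈ s, g a = a := by
  classical
  induction s using Finset.strongInduction with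
  | _ s ih =>
    intro a ha
    have hne : s.Nonempty := ⟨a, ha⟩
    have hinj : ∀ a₁ a₂ : Fin n, ∀ _ : a₁ ∈ s, ∀ _ : a₂ ∈ s, g a₁ = g a₂ → a₁ = a₂ := by
      intro a₁ a₂ h₁ h₂ he
      rcases lt_trichotomy a₁ a₂ with h | h | h
      · exact absurd he (hmono a₁ h₁ a₂ h₂ h).ne
      · exact h
      · exact absurd he.symm (hmono a₂ h₂ a₁ h₁ h).ne
    set m := s.min' hne with hm
    have hmem : m ∈ s := s.min'_mem hne
    have hgm : g m = m := by
      obtain ⟨x, hx, hxe⟩ := Finset.surj_on_of_inj_on_of_card_le (fun a _ => g a)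
        (fun a haa => hmaps a haa) hinj le_rfl m hmem
      rcases eq_or_lt_of_le (s.min'_le x hx) with h | h
      · rw [← h] at hxe; exact hxe.symm
      · exfalso
        have h1 : g m < g x := hmono m hmem x hx h
        rw [← hxe] at h1
        exact absurd (s.min'_le _ (hmaps m hmem)) (not_le.mpr h1)
    by_cases ham : a = m
    · rw [ham, hgm]
    · have hmain : a ∈ s.erase m := Finset.mem_erase.mpr ⟨ham, ha⟩
      refine ih (s.erase m) (Finset.erase_ssubset hmem) ?_ ?_ a hmain
      · intro x hx y hy hxy
        exact hmono x (Finset.mem_of_mem_erase hx) y (Finset.mem_of_mem_erase hy) hxy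
      · intro x hx
        refine Finset.mem_erase.mpr ⟨?_, hmaps x (Finset.mem_of_mem_erase hx)⟩
        intro hgx
        rw [← hgm] at hgx
        exact (Finset.mem_erase.mp hx).1
          (hinj x m (Finset.mem_of_mem_erase hx) hmem hgx)


section Moves

variable {A B : Fin n → Fin n → ℝ} {σ π : Equiv.Perm (Fin n)}

lemma cast_lt {a b : Fin n} (h : a < b) : (a.val : ℤ) < (b.val : ℤ) := by
  exact_mod_cast h

/-- Move SWAPσ. -/
lemma move_swap_sigma
    (hA : ∀ i k j l : Fin n, i < k → j < l → A i j + A k l ≤ A i l + A k j)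
    (hmin : IsMin A B σ π) {i j : Fin n} (hij : i < j)
    (hi : σ i ≠ π i) (hj : σ j ≠ π j) (hlt : σ j < σ i) : False := by
  classical
  set σ' : Equiv.Perm (Fin n) := σ * Equiv.swap i j with hσ'
  have hσ'i : σ' i = σ j := by simp [hσ', Equiv.Perm.mul_apply]
  have hσ'j : σ' j = σ i := by simp [hσ', Equiv.Perm.mul_apply]
  have hσ'o : ∀ h, h ≠ i → h ≠ j → σ' h = σ h := by
    intro h h1 h2
    simp [hσ', Equiv.Perm.mul_apply, Equiv.swap_apply_of_ne_of_ne h1 h2]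
  have hsA := sum_sub_eq_two (fun x => A x (σ' x)) (fun x => A x (σ x)) i j hij.ne
    (fun x h1 h2 => by simp only [hσ'o x h1 h2])
  simp only [hσ'i, hσ'j] at hsA
  have hcost : Cost A B σ' π ≤ Cost A B σ π := by
    have := hA i j (σ j) (σ i) hij hlt
    simp only [Cost]; linarith [hsA]
  have hagr : Agr σ π ≤ Agr σ' π := by
    apply Finset.card_le_card
    intro h hh
    simp only [Agr, Finset.mem_filter, Finset.mem_univ, true_and] at hh ⊢
    have h1 : h ≠ i := fun he => hi (he ▸ hh)
    have h2 : h ≠ j := fun he => hj (he ▸ hh)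
    rw [hσ'o h h1 h2]; exact hh
  have hphi : Phi σ' π < Phi σ π := by
    have hsP := sum_sub_eq_two
      (fun h => (h.val : ℤ) * (((π h).val : ℤ) - ((σ' h).val : ℤ)))
      (fun h => (h.val : ℤ) * (((π h).val : ℤ) - ((σ h).val : ℤ))) i j hij.ne
      (fun x h1 h2 => by simp only [hσ'o x h1 h2])
    simp only [hσ'i, hσ'j] at hsP
    have c1 : (i.val : ℤ) < j.val := cast_lt hij
    have c2 : ((σ j).val : ℤ) < (σ i).val := cast_lt hlt
    have : Phi σ' π - Phi σ π < 0 := by rw [Phi, Phi, hsP]; nlinarith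
    linarith
  exact hmin σ' π hcost hagr hphi

/-- Move SWAPπ. -/
lemma move_swap_pi
    (hB : ∀ i k j l : Fin n, i < k → j < l → B i l + B k j ≤ B i j + B k l)
    (hmin : IsMin A B σ π) {i j : Fin n} (hij : i < j)
    (hi : σ i ≠ π i) (hj : σ j ≠ π j) (hlt : π i < π j) : False := by
  classical
  set π' : Equiv.Perm (Fin n) := π * Equiv.swap i j with hπ'
  have hπ'i : π' i = π j := by simp [hπ', Equiv.Perm.mul_apply]
  have hπ'j : π' j = π i := by simp [hπ', Equiv.Perm.mul_apply]
  have hπ'o : ∀ h, h ≠ i → h ≠ j → π' h = π h := by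
    intro h h1 h2
    simp [hπ', Equiv.Perm.mul_apply, Equiv.swap_apply_of_ne_of_ne h1 h2]
  have hsB := sum_sub_eq_two (fun x => B x (π' x)) (fun x => B x (π x)) i j hij.ne
    (fun x h1 h2 => by simp only [hπ'o x h1 h2])
  simp only [hπ'i, hπ'j] at hsB
  have hcost : Cost A B σ π' ≤ Cost A B σ π := by
    have := hB i j (π i) (π j) hij hlt
    simp only [Cost]; linarith [hsB]
  have hagr : Agr σ π ≤ Agr σ π' := by
    apply Finset.card_le_card
    intro h hh
    simp only [Agr, Finset.mem_filter, Finset.mem_univ, true_and] at hh ⊢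
    have h1 : h ≠ i := fun he => hi (he ▸ hh)
    have h2 : h ≠ j := fun he => hj (he ▸ hh)
    rw [hπ'o h h1 h2]; exact hh
  have hphi : Phi σ π' < Phi σ π := by
    have hsP := sum_sub_eq_two
      (fun h => (h.val : ℤ) * (((π' h).val : ℤ) - ((σ h).val : ℤ)))
      (fun h => (h.val : ℤ) * (((π h).val : ℤ) - ((σ h).val : ℤ))) i j hij.ne
      (fun x h1 h2 => by simp only [hπ'o x h1 h2])
    simp only [hπ'i, hπ'j] at hsP
    have c1 : (i.val : ℤ) < j.val := cast_lt hij
    have c2 : ((π i).val : ℤ) < (π j).val := cast_lt hlt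
    have : Phi σ π' - Phi σ π < 0 := by rw [Phi, Phi, hsP]; nlinarith
    linarith
  exact hmin σ π' hcost hagr hphi

/-- Move ROLE: swap both σ and π values between two positions. -/
lemma move_role
    (hA : ∀ i k j l : Fin n, i < k → j < l → A i j + A k l ≤ A i l + A k j)
    (hB : ∀ i k j l : Fin n, i < k → j < l → B i l + B k j ≤ B i j + B k l)
    (hmin : IsMin A B σ π) {p q : Fin n} (hpq : p < q)
    (hσlt : σ q < σ p) (hπlt : π p < π q) : False := by
  classical
  set σ' : Equiv.Perm (Fin n) := σ * Equiv.swap p q with hσ'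
  set π' : Equiv.Perm (Fin n) := π * Equiv.swap p q with hπ'
  have hσ'p : σ' p = σ q := by simp [hσ', Equiv.Perm.mul_apply]
  have hσ'q : σ' q = σ p := by simp [hσ', Equiv.Perm.mul_apply]
  have hπ'p : π' p = π q := by simp [hπ', Equiv.Perm.mul_apply]
  have hπ'q : π' q = π p := by simp [hπ', Equiv.Perm.mul_apply]
  have hσ'o : ∀ h, h ≠ p → h ≠ q → σ' h = σ h := by
    intro h h1 h2
    simp [hσ', Equiv.Perm.mul_apply, Equiv.swap_apply_of_ne_of_ne h1 h2]
  have hπ'o : ∀ h, h ≠ p → h ≠ q → π' h = π h := by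
    intro h h1 h2
    simp [hπ', Equiv.Perm.mul_apply, Equiv.swap_apply_of_ne_of_ne h1 h2]
  have hsA := sum_sub_eq_two (fun x => A x (σ' x)) (fun x => A x (σ x)) p q hpq.ne
    (fun x h1 h2 => by simp only [hσ'o x h1 h2])
  simp only [hσ'p, hσ'q] at hsA
  have hsB := sum_sub_eq_two (fun x => B x (π' x)) (fun x => B x (π x)) p q hpq.ne
    (fun x h1 h2 => by simp only [hπ'o x h1 h2])
  simp only [hπ'p, hπ'q] at hsB
  have hcost : Cost A B σ' π' ≤ Cost A B σ π := by
    have h1 := hA p q (σ q) (σ p) hpq hσlt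
    have h2 := hB p q (π p) (π q) hpq hπlt
    simp only [Cost]; linarith [hsA, hsB]
  have hagr : Agr σ π ≤ Agr σ' π' := by
    apply Finset.card_le_card_of_injOn (Equiv.swap p q)
    · intro h hh
      simp only [Agr, Finset.coe_filter, Set.mem_setOf_eq, Finset.mem_filter, Finset.mem_univ, true_and] at hh ⊢
      by_cases h1 : h = p
      · subst h1; rw [Equiv.swap_apply_left, hσ'q, hπ'q]; exact hh
      · by_cases h2 : h = q
        · subst h2; rw [Equiv.swap_apply_right, hσ'p, hπ'p]; exact hh
        · rw [Equiv.swap_apply_of_ne_of_ne h1 h2, hσ'o h h1 h2, hπ'o h h1 h2]; exact hh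
    · exact (Equiv.injective _).injOn
  have hphi : Phi σ' π' < Phi σ π := by
    have hsP := sum_sub_eq_two
      (fun h => (h.val : ℤ) * (((π' h).val : ℤ) - ((σ' h).val : ℤ)))
      (fun h => (h.val : ℤ) * (((π h).val : ℤ) - ((σ h).val : ℤ))) p q hpq.ne
      (fun x h1 h2 => by simp only [hσ'o x h1 h2, hπ'o x h1 h2])
    simp only [hσ'p, hσ'q, hπ'p, hπ'q] at hsP
    have c1 : (p.val : ℤ) < q.val := cast_lt hpq
    have c2 : ((σ q).val : ℤ) < (σ p).val := cast_lt hσlt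
    have c3 : ((π p).val : ℤ) < (π q).val := cast_lt hπlt
    have : Phi σ' π' - Phi σ π < 0 := by rw [Phi, Phi, hsP]; nlinarith
    linarith
  exact hmin σ' π' hcost hagr hphi

end Moves

section Moves2

variable {A B : Fin n → Fin n → ℝ} {σ π : Equiv.Perm (Fin n)}

/-- Move δσ1: cyclic shift of σ-values at `a<b<c` with `σb<σc<σa`, `a` agreeing. -/
lemma move_cycle_sigma1
    (hA : ∀ i k j l : Fin n, i < k → j < l → A i j + A k l ≤ A i l + A k j)
    (hmin : IsMin A B σ π) {a b c : Fin n} (hab : a < b) (hbc : b < c)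
    (h1 : σ b < σ c) (h2 : σ c < σ a)
    (ha : σ a = π a) (hb : π b = σ c) (hcne : σ c ≠ π c) (hane : σ a ≠ π c) : False := by
  classical
  have hac : a < c := hab.trans hbc
  set σ' : Equiv.Perm (Fin n) := σ * (Equiv.swap a b * Equiv.swap b c) with hσ'
  have h'a : σ' a = σ b := by
    rw [hσ']; simp only [Equiv.Perm.mul_apply]
    rw [Equiv.swap_apply_of_ne_of_ne hab.ne hac.ne, Equiv.swap_apply_left]
  have h'b : σ' b = σ c := by
    rw [hσ']; simp only [Equiv.Perm.mul_apply]
    rw [Equiv.swap_apply_left, Equiv.swap_apply_of_ne_of_ne hac.ne' hbc.ne']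
  have h'c : σ' c = σ a := by
    rw [hσ']; simp only [Equiv.Perm.mul_apply]
    rw [Equiv.swap_apply_right, Equiv.swap_apply_right]
  have h'o : ∀ h, h ≠ a → h ≠ b → h ≠ c → σ' h = σ h := by
    intro h hha hhb hhc
    rw [hσ']; simp only [Equiv.Perm.mul_apply]
    rw [Equiv.swap_apply_of_ne_of_ne hhb hhc, Equiv.swap_apply_of_ne_of_ne hha hhb]
  have hsA := sum_sub_eq_three (fun x => A x (σ' x)) (fun x => A x (σ x)) a b c
    hab.ne hac.ne hbc.ne (fun x u1 u2 u3 => by simp only [h'o x u1 u2 u3])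
  simp only [h'a, h'b, h'c] at hsA
  have hcost : Cost A B σ' π ≤ Cost A B σ π := by
    have i1 := hA a b (σ b) (σ c) hab h1
    have i2 := hA a c (σ c) (σ a) hac h2
    simp only [Cost]; linarith [hsA]
  have hagr : Agr σ π ≤ Agr σ' π := by
    apply Finset.card_le_card_of_injOn (Equiv.swap a b)
    · intro h hh
      simp only [Agr, Finset.coe_filter, Set.mem_setOf_eq, Finset.mem_filter, Finset.mem_univ, true_and] at hh ⊢
      by_cases u1 : h = a
      · subst u1; rw [Equiv.swap_apply_left, h'b, ← hb]
      · by_cases u2 : h = b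
        · exfalso; subst u2
          exact absurd (hh.trans hb) (fun he => hbc.ne (σ.injective he))
        · by_cases u3 : h = c
          · exact absurd (u3 ▸ hh) hcne
          · rw [Equiv.swap_apply_of_ne_of_ne u1 u2, h'o h u1 u2 u3]; exact hh
    · exact (Equiv.injective _).injOn
  have hphi : Phi σ' π < Phi σ π := by
    have hsP := sum_sub_eq_three
      (fun h => (h.val : ℤ) * (((π h).val : ℤ) - ((σ' h).val : ℤ)))
      (fun h => (h.val : ℤ) * (((π h).val : ℤ) - ((σ h).val : ℤ))) a b c
      hab.ne hac.ne hbc.ne (fun x u1 u2 u3 => by simp only [h'o x u1 u2 u3])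
    simp only [h'a, h'b, h'c] at hsP
    have c1 : (a.val : ℤ) < b.val := cast_lt hab
    have c2 : (b.val : ℤ) < c.val := cast_lt hbc
    have c3 : ((σ b).val : ℤ) < (σ c).val := cast_lt h1
    have c4 : ((σ c).val : ℤ) < (σ a).val := cast_lt h2
    have : Phi σ' π - Phi σ π < 0 := by
      rw [Phi, Phi, hsP]
      nlinarith [mul_pos (sub_pos.mpr c3) (sub_pos.mpr c1),
        mul_pos (sub_pos.mpr c4) (sub_pos.mpr (c1.trans c2))]
    linarith
  exact hmin σ' π hcost hagr hphi

/-- Move δσ2: reverse cyclic shift, `σc<σa<σb`, `c` agreeing. -/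
lemma move_cycle_sigma2
    (hA : ∀ i k j l : Fin n, i < k → j < l → A i j + A k l ≤ A i l + A k j)
    (hmin : IsMin A B σ π) {a b c : Fin n} (hab : a < b) (hbc : b < c)
    (h1 : σ c < σ a) (h2 : σ a < σ b)
    (hc : σ c = π c) (hb : π b = σ a) (hane : σ a ≠ π a) (hcne : σ c ≠ π a) : False := by
  classical
  have hac : a < c := hab.trans hbc
  set σ' : Equiv.Perm (Fin n) := σ * (Equiv.swap b c * Equiv.swap a b) with hσ'
  have h'a : σ' a = σ c := by
    rw [hσ']; simp only [Equiv.Perm.mul_apply]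
    rw [Equiv.swap_apply_left, Equiv.swap_apply_left]
  have h'b : σ' b = σ a := by
    rw [hσ']; simp only [Equiv.Perm.mul_apply]
    rw [Equiv.swap_apply_right, Equiv.swap_apply_of_ne_of_ne hab.ne hac.ne]
  have h'c : σ' c = σ b := by
    rw [hσ']; simp only [Equiv.Perm.mul_apply]
    rw [Equiv.swap_apply_of_ne_of_ne hac.ne' hbc.ne', Equiv.swap_apply_right]
  have h'o : ∀ h, h ≠ a → h ≠ b → h ≠ c → σ' h = σ h := by
    intro h hha hhb hhc
    rw [hσ']; simp only [Equiv.Perm.mul_apply]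
    rw [Equiv.swap_apply_of_ne_of_ne hha hhb, Equiv.swap_apply_of_ne_of_ne hhb hhc]
  have hsA := sum_sub_eq_three (fun x => A x (σ' x)) (fun x => A x (σ x)) a b c
    hab.ne hac.ne hbc.ne (fun x u1 u2 u3 => by simp only [h'o x u1 u2 u3])
  simp only [h'a, h'b, h'c] at hsA
  have hcost : Cost A B σ' π ≤ Cost A B σ π := by
    have i1 := hA a b (σ c) (σ a) hab h1
    have i2 := hA b c (σ c) (σ b) hbc (h1.trans h2)
    simp only [Cost]; linarith [hsA]
  have hagr : Agr σ π ≤ Agr σ' π := by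
    apply Finset.card_le_card_of_injOn (Equiv.swap b c)
    · intro h hh
      simp only [Agr, Finset.coe_filter, Set.mem_setOf_eq, Finset.mem_filter, Finset.mem_univ, true_and] at hh ⊢
      by_cases u1 : h = a
      · exact absurd (u1 ▸ hh) hane
      · by_cases u2 : h = b
        · exfalso; subst u2
          exact absurd (hh.trans hb) (fun he => hab.ne' (σ.injective he))
        · by_cases u3 : h = c
          · subst u3; rw [Equiv.swap_apply_right, h'b, ← hb]
          · rw [Equiv.swap_apply_of_ne_of_ne u2 u3, h'o h u1 u2 u3]; exact hh
    · exact (Equiv.injective _).injOn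
  have hphi : Phi σ' π < Phi σ π := by
    have hsP := sum_sub_eq_three
      (fun h => (h.val : ℤ) * (((π h).val : ℤ) - ((σ' h).val : ℤ)))
      (fun h => (h.val : ℤ) * (((π h).val : ℤ) - ((σ h).val : ℤ))) a b c
      hab.ne hac.ne hbc.ne (fun x u1 u2 u3 => by simp only [h'o x u1 u2 u3])
    simp only [h'a, h'b, h'c] at hsP
    have c1 : (a.val : ℤ) < b.val := cast_lt hab
    have c2 : (b.val : ℤ) < c.val := cast_lt hbc
    have c3 : ((σ c).val : ℤ) < (σ a).val := cast_lt h1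
    have c4 : ((σ a).val : ℤ) < (σ b).val := cast_lt h2
    have : Phi σ' π - Phi σ π < 0 := by
      rw [Phi, Phi, hsP]
      nlinarith [mul_pos (sub_pos.mpr c3) (sub_pos.mpr (c1.trans c2)),
        mul_pos (sub_pos.mpr c4) (sub_pos.mpr c2)]
    linarith
  exact hmin σ' π hcost hagr hphi

/-- Move δπ1: cyclic shift of π-values at `a<b<c` with `πa<πc<πb`, `a` agreeing. -/
lemma move_cycle_pi1
    (hB : ∀ i k j l : Fin n, i < k → j < l → B i l + B k j ≤ B i j + B k l)
    (hmin : IsMin A B σ π) {a b c : Fin n} (hab : a < b) (hbc : b < c)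
    (h1 : π a < π c) (h2 : π c < π b)
    (ha : σ a = π a) (hb : σ b = π c) (hcne : σ c ≠ π c) (hane : σ c ≠ π a) : False := by
  classical
  have hac : a < c := hab.trans hbc
  set π' : Equiv.Perm (Fin n) := π * (Equiv.swap a b * Equiv.swap b c) with hπ'
  have h'a : π' a = π b := by
    rw [hπ']; simp only [Equiv.Perm.mul_apply]
    rw [Equiv.swap_apply_of_ne_of_ne hab.ne hac.ne, Equiv.swap_apply_left]
  have h'b : π' b = π c := by
    rw [hπ']; simp only [Equiv.Perm.mul_apply]
    rw [Equiv.swap_apply_left, Equiv.swap_apply_of_ne_of_ne hac.ne' hbc.ne']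
  have h'c : π' c = π a := by
    rw [hπ']; simp only [Equiv.Perm.mul_apply]
    rw [Equiv.swap_apply_right, Equiv.swap_apply_right]
  have h'o : ∀ h, h ≠ a → h ≠ b → h ≠ c → π' h = π h := by
    intro h hha hhb hhc
    rw [hπ']; simp only [Equiv.Perm.mul_apply]
    rw [Equiv.swap_apply_of_ne_of_ne hhb hhc, Equiv.swap_apply_of_ne_of_ne hha hhb]
  have hsB := sum_sub_eq_three (fun x => B x (π' x)) (fun x => B x (π x)) a b c
    hab.ne hac.ne hbc.ne (fun x u1 u2 u3 => by simp only [h'o x u1 u2 u3])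
  simp only [h'a, h'b, h'c] at hsB
  have hcost : Cost A B σ π' ≤ Cost A B σ π := by
    have i1 := hB a b (π c) (π b) hab h2
    have i2 := hB a c (π a) (π c) hac h1
    simp only [Cost]; linarith [hsB]
  have hagr : Agr σ π ≤ Agr σ π' := by
    apply Finset.card_le_card_of_injOn (Equiv.swap a b)
    · intro h hh
      simp only [Agr, Finset.coe_filter, Set.mem_setOf_eq, Finset.mem_filter, Finset.mem_univ, true_and] at hh ⊢
      by_cases u1 : h = a
      · subst u1; rw [Equiv.swap_apply_left, h'b, hb]
      · by_cases u2 : h = b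
        · exfalso; subst u2
          exact hbc.ne (π.injective (hh.symm.trans hb))
        · by_cases u3 : h = c
          · exact absurd (u3 ▸ hh) hcne
          · rw [Equiv.swap_apply_of_ne_of_ne u1 u2, h'o h u1 u2 u3]; exact hh
    · exact (Equiv.injective _).injOn
  have hphi : Phi σ π' < Phi σ π := by
    have hsP := sum_sub_eq_three
      (fun h => (h.val : ℤ) * (((π' h).val : ℤ) - ((σ h).val : ℤ)))
      (fun h => (h.val : ℤ) * (((π h).val : ℤ) - ((σ h).val : ℤ))) a b c
      hab.ne hac.ne hbc.ne (fun x u1 u2 u3 => by simp only [h'o x u1 u2 u3])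
    simp only [h'a, h'b, h'c] at hsP
    have c1 : (a.val : ℤ) < b.val := cast_lt hab
    have c2 : (b.val : ℤ) < c.val := cast_lt hbc
    have c3 : ((π a).val : ℤ) < (π c).val := cast_lt h1
    have c4 : ((π c).val : ℤ) < (π b).val := cast_lt h2
    have : Phi σ π' - Phi σ π < 0 := by
      rw [Phi, Phi, hsP]
      nlinarith [mul_pos (sub_pos.mpr c4) (sub_pos.mpr c1),
        mul_pos (sub_pos.mpr c3) (sub_pos.mpr (c1.trans c2))]
    linarith
  exact hmin σ π' hcost hagr hphi

/-- Move δπ2: reverse cyclic shift of π-values, `πb<πa<πc`, `c` agreeing. -/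
lemma move_cycle_pi2
    (hB : ∀ i k j l : Fin n, i < k → j < l → B i l + B k j ≤ B i j + B k l)
    (hmin : IsMin A B σ π) {a b c : Fin n} (hab : a < b) (hbc : b < c)
    (h1 : π b < π a) (h2 : π a < π c)
    (hc : σ c = π c) (hb : σ b = π a) (hane : σ a ≠ π a) (hcne : σ a ≠ π c) : False := by
  classical
  have hac : a < c := hab.trans hbc
  set π' : Equiv.Perm (Fin n) := π * (Equiv.swap b c * Equiv.swap a b) with hπ'
  have h'a : π' a = π c := by
    rw [hπ']; simp only [Equiv.Perm.mul_apply]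
    rw [Equiv.swap_apply_left, Equiv.swap_apply_left]
  have h'b : π' b = π a := by
    rw [hπ']; simp only [Equiv.Perm.mul_apply]
    rw [Equiv.swap_apply_right, Equiv.swap_apply_of_ne_of_ne hab.ne hac.ne]
  have h'c : π' c = π b := by
    rw [hπ']; simp only [Equiv.Perm.mul_apply]
    rw [Equiv.swap_apply_of_ne_of_ne hac.ne' hbc.ne', Equiv.swap_apply_right]
  have h'o : ∀ h, h ≠ a → h ≠ b → h ≠ c → π' h = π h := by
    intro h hha hhb hhc
    rw [hπ']; simp only [Equiv.Perm.mul_apply]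
    rw [Equiv.swap_apply_of_ne_of_ne hha hhb, Equiv.swap_apply_of_ne_of_ne hhb hhc]
  have hsB := sum_sub_eq_three (fun x => B x (π' x)) (fun x => B x (π x)) a b c
    hab.ne hac.ne hbc.ne (fun x u1 u2 u3 => by simp only [h'o x u1 u2 u3])
  simp only [h'a, h'b, h'c] at hsB
  have hcost : Cost A B σ π' ≤ Cost A B σ π := by
    have i1 := hB b c (π b) (π a) hbc h1
    have i2 := hB a c (π a) (π c) hac h2
    simp only [Cost]; linarith [hsB]
  have hagr : Agr σ π ≤ Agr σ π' := by
    apply Finset.card_le_card_of_injOn (Equiv.swap b c)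
    · intro h hh
      simp only [Agr, Finset.coe_filter, Set.mem_setOf_eq, Finset.mem_filter, Finset.mem_univ, true_and] at hh ⊢
      by_cases u1 : h = a
      · exact absurd (u1 ▸ hh) hane
      · by_cases u2 : h = b
        · exfalso; subst u2
          exact hab.ne' (π.injective (hh.symm.trans hb))
        · by_cases u3 : h = c
          · subst u3; rw [Equiv.swap_apply_right, h'b, hb]
          · rw [Equiv.swap_apply_of_ne_of_ne u2 u3, h'o h u1 u2 u3]; exact hh
    · exact (Equiv.injective _).injOn
  have hphi : Phi σ π' < Phi σ π := by
    have hsP := sum_sub_eq_three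
      (fun h => (h.val : ℤ) * (((π' h).val : ℤ) - ((σ h).val : ℤ)))
      (fun h => (h.val : ℤ) * (((π h).val : ℤ) - ((σ h).val : ℤ))) a b c
      hab.ne hac.ne hbc.ne (fun x u1 u2 u3 => by simp only [h'o x u1 u2 u3])
    simp only [h'a, h'b, h'c] at hsP
    have c1 : (a.val : ℤ) < b.val := cast_lt hab
    have c2 : (b.val : ℤ) < c.val := cast_lt hbc
    have c3 : ((π b).val : ℤ) < (π a).val := cast_lt h1
    have c4 : ((π a).val : ℤ) < (π c).val := cast_lt h2
    have : Phi σ π' - Phi σ π < 0 := by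
      rw [Phi, Phi, hsP]
      nlinarith [mul_pos (sub_pos.mpr c4) (sub_pos.mpr (c1.trans c2)),
        mul_pos (sub_pos.mpr c3) (sub_pos.mpr c2)]
    linarith
  exact hmin σ π' hcost hagr hphi

/-- Move DOUBLE1: agreement `b` takes the smaller value `σ a` ... (case middle, w<v). -/
lemma move_double1
    (hA : ∀ i k j l : Fin n, i < k → j < l → A i j + A k l ≤ A i l + A k j)
    (hB : ∀ i k j l : Fin n, i < k → j < l → B i l + B k j ≤ B i j + B k l)
    (hmin : IsMin A B σ π) {a b c : Fin n} (hab : a < b) (hbc : b < c)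
    (h1 : σ b < σ a) (h2 : π b < π c)
    (hb : σ b = π b) (hswap : σ a = π c) (hane : σ a ≠ π a) (hcne : σ c ≠ π c) : False := by
  classical
  have hac : a < c := hab.trans hbc
  set σ' : Equiv.Perm (Fin n) := σ * Equiv.swap a b with hσ'
  set π' : Equiv.Perm (Fin n) := π * Equiv.swap b c with hπ'
  have hσ'a : σ' a = σ b := by simp [hσ', Equiv.Perm.mul_apply]
  have hσ'b : σ' b = σ a := by simp [hσ', Equiv.Perm.mul_apply]
  have hσ'o : ∀ h, h ≠ a → h ≠ b → σ' h = σ h := by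
    intro h u1 u2
    simp [hσ', Equiv.Perm.mul_apply, Equiv.swap_apply_of_ne_of_ne u1 u2]
  have hπ'b : π' b = π c := by simp [hπ', Equiv.Perm.mul_apply]
  have hπ'c : π' c = π b := by simp [hπ', Equiv.Perm.mul_apply]
  have hπ'o : ∀ h, h ≠ b → h ≠ c → π' h = π h := by
    intro h u1 u2
    simp [hπ', Equiv.Perm.mul_apply, Equiv.swap_apply_of_ne_of_ne u1 u2]
  have hsA := sum_sub_eq_two (fun x => A x (σ' x)) (fun x => A x (σ x)) a b hab.ne
    (fun x u1 u2 => by simp only [hσ'o x u1 u2])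
  simp only [hσ'a, hσ'b] at hsA
  have hsB := sum_sub_eq_two (fun x => B x (π' x)) (fun x => B x (π x)) b c hbc.ne
    (fun x u1 u2 => by simp only [hπ'o x u1 u2])
  simp only [hπ'b, hπ'c] at hsB
  have hcost : Cost A B σ' π' ≤ Cost A B σ π := by
    have i1 := hA a b (σ b) (σ a) hab h1
    have i2 := hB b c (π b) (π c) hbc h2
    simp only [Cost]; linarith [hsA, hsB]
  have hagr : Agr σ π ≤ Agr σ' π' := by
    apply Finset.card_le_card
    intro h hh
    simp only [Agr, Finset.mem_filter, Finset.mem_univ, true_and] at hh ⊢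
    by_cases u1 : h = a
    · exact absurd (u1 ▸ hh) hane
    · by_cases u3 : h = c
      · exact absurd (u3 ▸ hh) hcne
      · by_cases u2 : h = b
        · subst u2; rw [hσ'b, hπ'b, hswap]
        · rw [hσ'o h u1 u2, hπ'o h u2 u3]; exact hh
  have hphi : Phi σ' π' < Phi σ π := by
    have hsP := sum_sub_eq_three
      (fun h => (h.val : ℤ) * (((π' h).val : ℤ) - ((σ' h).val : ℤ)))
      (fun h => (h.val : ℤ) * (((π h).val : ℤ) - ((σ h).val : ℤ))) a b c
      hab.ne hac.ne hbc.ne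
      (fun x u1 u2 u3 => by simp only [hσ'o x u1 u2, hπ'o x u2 u3])
    have e1 : π' a = π a := hπ'o a hab.ne hac.ne
    have e2 : σ' c = σ c := hσ'o c (hac.ne') (hbc.ne')
    simp only [hσ'a, hσ'b, hπ'b, hπ'c, e1, e2] at hsP
    have c1 : (a.val : ℤ) < b.val := cast_lt hab
    have c2 : (b.val : ℤ) < c.val := cast_lt hbc
    have c3 : ((σ b).val : ℤ) < (σ a).val := cast_lt h1
    have c4 : ((π b).val : ℤ) < (π c).val := cast_lt h2
    have : Phi σ' π' - Phi σ π < 0 := by rw [Phi, Phi, hsP]; nlinarith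
    linarith
  exact hmin σ' π' hcost hagr hphi

/-- Move DOUBLE2: agreement `b` takes the larger value ... (case middle, w>v'). -/
lemma move_double2
    (hA : ∀ i k j l : Fin n, i < k → j < l → A i j + A k l ≤ A i l + A k j)
    (hB : ∀ i k j l : Fin n, i < k → j < l → B i l + B k j ≤ B i j + B k l)
    (hmin : IsMin A B σ π) {a b c : Fin n} (hab : a < b) (hbc : b < c)
    (h1 : σ c < σ b) (h2 : π a < π b)
    (hb : σ b = π b) (hswap : σ c = π a) (hane : σ a ≠ π a) (hcne : σ c ≠ π c) : False := by
  classical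
  have hac : a < c := hab.trans hbc
  set σ' : Equiv.Perm (Fin n) := σ * Equiv.swap b c with hσ'
  set π' : Equiv.Perm (Fin n) := π * Equiv.swap a b with hπ'
  have hσ'b : σ' b = σ c := by simp [hσ', Equiv.Perm.mul_apply]
  have hσ'c : σ' c = σ b := by simp [hσ', Equiv.Perm.mul_apply]
  have hσ'o : ∀ h, h ≠ b → h ≠ c → σ' h = σ h := by
    intro h u1 u2
    simp [hσ', Equiv.Perm.mul_apply, Equiv.swap_apply_of_ne_of_ne u1 u2]
  have hπ'a : π' a = π b := by simp [hπ', Equiv.Perm.mul_apply]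
  have hπ'b : π' b = π a := by simp [hπ', Equiv.Perm.mul_apply]
  have hπ'o : ∀ h, h ≠ a → h ≠ b → π' h = π h := by
    intro h u1 u2
    simp [hπ', Equiv.Perm.mul_apply, Equiv.swap_apply_of_ne_of_ne u1 u2]
  have hsA := sum_sub_eq_two (fun x => A x (σ' x)) (fun x => A x (σ x)) b c hbc.ne
    (fun x u1 u2 => by simp only [hσ'o x u1 u2])
  simp only [hσ'b, hσ'c] at hsA
  have hsB := sum_sub_eq_two (fun x => B x (π' x)) (fun x => B x (π x)) a b hab.ne
    (fun x u1 u2 => by simp only [hπ'o x u1 u2])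
  simp only [hπ'a, hπ'b] at hsB
  have hcost : Cost A B σ' π' ≤ Cost A B σ π := by
    have i1 := hA b c (σ c) (σ b) hbc h1
    have i2 := hB a b (π a) (π b) hab h2
    simp only [Cost]; linarith [hsA, hsB]
  have hagr : Agr σ π ≤ Agr σ' π' := by
    apply Finset.card_le_card
    intro h hh
    simp only [Agr, Finset.mem_filter, Finset.mem_univ, true_and] at hh ⊢
    by_cases u1 : h = a
    · exact absurd (u1 ▸ hh) hane
    · by_cases u3 : h = c
      · exact absurd (u3 ▸ hh) hcne
      · by_cases u2 : h = b
        · subst u2; rw [hσ'b, hπ'b, hswap]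
        · rw [hσ'o h u2 u3, hπ'o h u1 u2]; exact hh
  have hphi : Phi σ' π' < Phi σ π := by
    have hsP := sum_sub_eq_three
      (fun h => (h.val : ℤ) * (((π' h).val : ℤ) - ((σ' h).val : ℤ)))
      (fun h => (h.val : ℤ) * (((π h).val : ℤ) - ((σ h).val : ℤ))) a b c
      hab.ne hac.ne hbc.ne
      (fun x u1 u2 u3 => by simp only [hσ'o x u2 u3, hπ'o x u1 u2])
    have e1 : σ' a = σ a := hσ'o a (hab.ne) (hac.ne)
    have e2 : π' c = π c := hπ'o c (hac.ne') (hbc.ne')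
    simp only [hσ'b, hσ'c, hπ'a, hπ'b, e1, e2] at hsP
    have c1 : (a.val : ℤ) < b.val := cast_lt hab
    have c2 : (b.val : ℤ) < c.val := cast_lt hbc
    have c3 : ((σ c).val : ℤ) < (σ b).val := cast_lt h1
    have c4 : ((π a).val : ℤ) < (π b).val := cast_lt h2
    have : Phi σ' π' - Phi σ π < 0 := by rw [Phi, Phi, hsP]; nlinarith
    linarith
  exact hmin σ' π' hcost hagr hphi

end Moves2

section Structure

variable {A B : Fin n → Fin n → ℝ} {σ π : Equiv.Perm (Fin n)}

/-- σ is increasing on disagreement positions. -/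
lemma mono_sigma (hA : ∀ i k j l : Fin n, i < k → j < l → A i j + A k l ≤ A i l + A k j)
    (hmin : IsMin A B σ π) {i j : Fin n} (hij : i < j)
    (hi : σ i ≠ π i) (hj : σ j ≠ π j) : σ i < σ j := by
  rcases lt_trichotomy (σ i) (σ j) with h | h | h
  · exact h
  · exact absurd (σ.injective h) hij.ne
  · exact (move_swap_sigma hA hmin hij hi hj h).elim

/-- π is decreasing on disagreement positions. -/
lemma anti_pi (hB : ∀ i k j l : Fin n, i < k → j < l → B i l + B k j ≤ B i j + B k l)
    (hmin : IsMin A B σ π) {i j : Fin n} (hij : i < j)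
    (hi : σ i ≠ π i) (hj : σ j ≠ π j) : π j < π i := by
  rcases lt_trichotomy (π i) (π j) with h | h | h
  · exact (move_swap_pi hB hmin hij hi hj h).elim
  · exact absurd (π.injective h) hij.ne
  · exact h

lemma sigma_tau (i : Fin n) : σ ((σ⁻¹ * π) i) = π i := by
  simp [Equiv.Perm.mul_apply]

lemma tau_disagree {i : Fin n} (hi : σ i ≠ π i) :
    σ ((σ⁻¹ * π) i) ≠ π ((σ⁻¹ * π) i) := by
  intro h
  have h1 : σ ((σ⁻¹ * π) i) = π i := sigma_tau i
  have h3 : (σ⁻¹ * π) i = i := π.injective (h.symm.trans h1)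
  rw [h3] at h1
  exact hi h1

lemma tau_fix {i : Fin n} (hi : σ i = π i) : (σ⁻¹ * π) i = i := by
  rw [Equiv.Perm.mul_apply, ← hi, (show σ⁻¹ (σ i) = i from Equiv.symm_apply_apply σ i)]

lemma tau_anti (hA : ∀ i k j l : Fin n, i < k → j < l → A i j + A k l ≤ A i l + A k j)
    (hB : ∀ i k j l : Fin n, i < k → j < l → B i l + B k j ≤ B i j + B k l)
    (hmin : IsMin A B σ π) {i j : Fin n} (hij : i < j)
    (hi : σ i ≠ π i) (hj : σ j ≠ π j) : (σ⁻¹ * π) j < (σ⁻¹ * π) i := by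
  have hπ : π j < π i := anti_pi hB hmin hij hi hj
  have hdi := tau_disagree (σ := σ) (π := π) hi
  have hdj := tau_disagree (σ := σ) (π := π) hj
  rcases lt_trichotomy ((σ⁻¹ * π) j) ((σ⁻¹ * π) i) with h | h | h
  · exact h
  · exact absurd ((σ⁻¹ * π).injective h) hij.ne'
  · exfalso
    have := mono_sigma hA hmin h hdi hdj
    rw [sigma_tau, sigma_tau] at this
    exact absurd hπ (not_lt.mpr this.le)

lemma tau_invol (hA : ∀ i k j l : Fin n, i < k → j < l → A i j + A k l ≤ A i l + A k j)
    (hB : ∀ i k j l : Fin n, i < k → j < l → B i l + B k j ≤ B i j + B k l)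
    (hmin : IsMin A B σ π) : (σ⁻¹ * π) * (σ⁻¹ * π) = 1 := by
  classical
  ext i
  rw [Equiv.Perm.mul_apply, Equiv.Perm.one_apply]
  by_cases hi : σ i = π i
  · have h1 := tau_fix (σ := σ) (π := π) hi
    rw [h1, h1]
  · have key := strictMonoOn_self_id (Finset.univ.filter fun j : Fin n => σ j ≠ π j)
      (fun j => (σ⁻¹ * π) ((σ⁻¹ * π) j)) ?_ ?_ i (by simp [hi])
    · exact congrArg Fin.val (by simpa using key)
    · intro a ha b hb hab
      simp only [Finset.mem_filter, Finset.mem_univ, true_and] at ha hb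
      have h1 : (σ⁻¹ * π) b < (σ⁻¹ * π) a := tau_anti hA hB hmin hab ha hb
      exact tau_anti hA hB hmin h1 (tau_disagree hb) (tau_disagree ha)
    · intro a ha
      simp only [Finset.mem_filter, Finset.mem_univ, true_and] at ha ⊢
      exact tau_disagree (tau_disagree ha)

/-- every 2-cycle is nested inside every 4-cycle -/
lemma two_in_four (hA : ∀ i k j l : Fin n, i < k → j < l → A i j + A k l ≤ A i l + A k j)
    (hB : ∀ i k j l : Fin n, i < k → j < l → B i l + B k j ≤ B i j + B k l)
    (hmin : IsMin A B σ π) {x i i' : Fin n} (hx : σ x = π x) (hii' : i < i')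
    (hti : (σ⁻¹ * π) i = i') : i < x ∧ x < i' ∧ σ i < σ x ∧ σ x < σ i' := by
  have hdi : σ i ≠ π i := by
    intro h
    exact hii'.ne ((tau_fix h).symm.trans hti)
  have hdi' : σ i' ≠ π i' := hti ▸ tau_disagree hdi
  have hπi : π i = σ i' := by rw [← hti, sigma_tau]
  have htii : (σ⁻¹ * π) i' = i := by
    have h0 := tau_invol hA hB hmin (σ := σ) (π := π)
    have h1 : (σ⁻¹ * π) ((σ⁻¹ * π) i) = i := by
      rw [← Equiv.Perm.mul_apply, h0, Equiv.Perm.one_apply]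
    rw [← hti]; exact h1
  have hπi' : π i' = σ i := by rw [← htii, sigma_tau]
  have hvv' : σ i < σ i' := mono_sigma hA hmin hii' hdi hdi'
  have hxi : x ≠ i := fun h => hdi (h ▸ hx)
  have hxi' : x ≠ i' := fun h => hdi' (h ▸ hx)
  have hwv : σ x ≠ σ i := fun h => hxi (σ.injective h)
  have hwv' : σ x ≠ σ i' := fun h => hxi' (σ.injective h)
  have claim1 : i < x := by
    by_contra hcon
    have hxlt : x < i := lt_of_le_of_ne (not_lt.mp hcon) hxi
    rcases lt_trichotomy (σ x) (σ i) with h | h | h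
    · exact move_cycle_pi1 hB hmin hxlt hii'
        (by rw [← hx, hπi']; exact h) (by rw [hπi', hπi]; exact hvv')
        hx hπi'.symm hdi' (by rw [← hx]; exact hwv'.symm)
    · exact hwv h
    · rcases lt_trichotomy (σ x) (σ i') with h2 | h2 | h2
      · exact move_role hA hB hmin hxlt h (by rw [← hx, hπi]; exact h2)
      · exact hwv' h2
      · exact move_cycle_sigma1 hA hmin hxlt hii' hvv' h2 hx hπi hdi'
          (by rw [hπi']; exact hwv)
  have claim2 : x < i' := by
    by_contra hcon
    have hxlt : i' < x := lt_of_le_of_ne (not_lt.mp hcon) hxi'.symm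
    rcases lt_trichotomy (σ x) (σ i) with h | h | h
    · exact move_cycle_sigma2 hA hmin hii' hxlt h hvv' hx hπi' hdi
        (by rw [hπi]; exact hwv')
    · exact hwv h
    · rcases lt_trichotomy (σ x) (σ i') with h2 | h2 | h2
      · exact move_role hA hB hmin hxlt h2 (by rw [hπi', ← hx]; exact h)
      · exact hwv' h2
      · exact move_cycle_pi2 hB hmin hii' hxlt
          (by rw [hπi', hπi]; exact hvv') (by rw [← hx, hπi]; exact h2)
          hx hπi.symm hdi (by rw [← hx]; exact hwv.symm)
  have claim3 : σ i < σ x := by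
    rcases lt_trichotomy (σ i) (σ x) with h | h | h
    · exact h
    · exact (hwv h.symm).elim
    · exact (move_double1 hA hB hmin claim1 claim2 h
        (by rw [← hx, hπi']; exact h) hx hπi'.symm hdi hdi').elim
  have claim4 : σ x < σ i' := by
    rcases lt_trichotomy (σ x) (σ i') with h | h | h
    · exact h
    · exact (hwv' h).elim
    · exact (move_double2 hA hB hmin claim1 claim2 h
        (by rw [hπi, ← hx]; exact h) hx hπi.symm hdi hdi').elim
  exact ⟨claim1, claim2, claim3, claim4⟩

end Structure

end RecovAPAux

set_option maxHeartbeats 1600000 in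
/-- **Lemma: 2-cycles nested inside 4-cycles.**
Let `A` be Monge, `B` Anti-Monge and `0 ≤ k ≤ n`.  Then there is an optimal solution `(σ, π)`
of RecovAP (feasible, with minimum cost among all feasible pairs) such that `τ = σ⁻¹ ∘ π` is an
involution (only 2-cycles and 4-cycles), every 4-cycle is aligned, every two distinct 4-cycles
are nested, and every 2-cycle is nested inside every 4-cycle. -/
theorem recovAP_monge_antiMonge_two_cycles_nested (n k : ℕ) (hn : 1 ≤ n) (hk : k ≤ n)
    (A B : Fin n → Fin n → ℝ)
    (hA : ∀ i k j l : Fin n, i < k → j < l → A i j + A k l ≤ A i l + A k j)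
    (hB : ∀ i k j l : Fin n, i < k → j < l → B i l + B k j ≤ B i j + B k l) :
    ∃ σ π : Equiv.Perm (Fin n),
      -- feasible
      (k ≤ (Finset.univ.filter fun i : Fin n => σ i = π i).card) ∧
      -- minimum cost among all feasible pairs
      (∀ σ' π' : Equiv.Perm (Fin n),
        k ≤ (Finset.univ.filter fun i : Fin n => σ' i = π' i).card →
        (∑ i, A i (σ i)) + (∑ i, B i (π i)) ≤ (∑ i, A i (σ' i)) + (∑ i, B i (π' i))) ∧
      -- only 2-cycles and 4-cycles: σ⁻¹ ∘ π is an involution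
      (σ⁻¹ * π) * (σ⁻¹ * π) = 1 ∧
      -- every 4-cycle is aligned
      (∀ i i' : Fin n, i < i' → (σ⁻¹ * π) i = i' → σ i < σ i') ∧
      -- every two distinct 4-cycles are nested
      (∀ i₁ i₁' i₂ i₂' : Fin n, i₁ < i₁' → i₂ < i₂' →
        (σ⁻¹ * π) i₁ = i₁' → (σ⁻¹ * π) i₂ = i₂' → i₁ ≠ i₂ →
        ((i₂ < i₁ ∧ i₁' < i₂' ∧ σ i₂ < σ i₁ ∧ σ i₁ < σ i₁' ∧ σ i₁' < σ i₂') ∨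
         (i₁ < i₂ ∧ i₂' < i₁' ∧ σ i₁ < σ i₂ ∧ σ i₂ < σ i₂' ∧ σ i₂' < σ i₁'))) ∧
      -- every 2-cycle is nested inside every 4-cycle
      (∀ x : Fin n, σ x = π x → ∀ i i' : Fin n, i < i' → (σ⁻¹ * π) i = i' →
        i < x ∧ x < i' ∧ σ i < σ x ∧ σ x < σ i') := by
  classical
  open RecovAPAux in
  have hfeas1 : ((1, 1) : Equiv.Perm (Fin n) × Equiv.Perm (Fin n)) ∈
      (Finset.univ.filter fun p : Equiv.Perm (Fin n) × Equiv.Perm (Fin n) =>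
        k ≤ RecovAPAux.Agr p.1 p.2) := by
    refine Finset.mem_filter.mpr ⟨Finset.mem_univ _, ?_⟩
    have : RecovAPAux.Agr (1 : Equiv.Perm (Fin n)) 1 = n := by
      simp [RecovAPAux.Agr]
    simpa [this] using hk
  obtain ⟨p₀, hp₀, hmin₀⟩ :=
    (Finset.univ.filter fun p : Equiv.Perm (Fin n) × Equiv.Perm (Fin n) =>
      k ≤ RecovAPAux.Agr p.1 p.2).exists_min_image
      (fun p => RecovAPAux.Cost A B p.1 p.2) ⟨(1, 1), hfeas1⟩
  obtain ⟨p₁, hp₁, hmax₁⟩ :=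
    ((Finset.univ.filter fun p : Equiv.Perm (Fin n) × Equiv.Perm (Fin n) =>
        k ≤ RecovAPAux.Agr p.1 p.2).filter fun p =>
      RecovAPAux.Cost A B p.1 p.2 = RecovAPAux.Cost A B p₀.1 p₀.2).exists_max_image
      (fun p => RecovAPAux.Agr p.1 p.2) ⟨p₀, Finset.mem_filter.mpr ⟨hp₀, rfl⟩⟩
  obtain ⟨⟨σ, π⟩, hp₂, hmin₂⟩ :=
    (((Finset.univ.filter fun p : Equiv.Perm (Fin n) × Equiv.Perm (Fin n) =>
          k ≤ RecovAPAux.Agr p.1 p.2).filter fun p =>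
        RecovAPAux.Cost A B p.1 p.2 = RecovAPAux.Cost A B p₀.1 p₀.2).filter fun p =>
      RecovAPAux.Agr p.1 p.2 = RecovAPAux.Agr p₁.1 p₁.2).exists_min_image
      (fun p => RecovAPAux.Phi p.1 p.2) ⟨p₁, by exact Finset.mem_filter.mpr ⟨hp₁, rfl⟩⟩
  have h2 := Finset.mem_filter.mp hp₂
  have h1 := Finset.mem_filter.mp h2.1
  have h0 : k ≤ RecovAPAux.Agr σ π := (Finset.mem_filter.mp h1.1).2
  have hcost_eq : RecovAPAux.Cost A B σ π = RecovAPAux.Cost A B p₀.1 p₀.2 := h1.2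
  have hagr_eq : RecovAPAux.Agr σ π = RecovAPAux.Agr p₁.1 p₁.2 := h2.2
  have hmin : RecovAPAux.IsMin A B σ π := by
    intro σ' π' hc hf hphi
    have hS' : (σ', π') ∈ Finset.univ.filter
        fun p : Equiv.Perm (Fin n) × Equiv.Perm (Fin n) => k ≤ RecovAPAux.Agr p.1 p.2 :=
      Finset.mem_filter.mpr ⟨Finset.mem_univ _, le_trans h0 hf⟩
    have hge : RecovAPAux.Cost A B p₀.1 p₀.2 ≤ RecovAPAux.Cost A B σ' π' := hmin₀ _ hS'
    have hceq : RecovAPAux.Cost A B σ' π' = RecovAPAux.Cost A B p₀.1 p₀.2 :=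
      le_antisymm (hc.trans_eq hcost_eq) hge
    have hS1' : (σ', π') ∈ (Finset.univ.filter fun p : Equiv.Perm (Fin n) × Equiv.Perm (Fin n) =>
        k ≤ RecovAPAux.Agr p.1 p.2).filter
        (fun p => RecovAPAux.Cost A B p.1 p.2 = RecovAPAux.Cost A B p₀.1 p₀.2) :=
      Finset.mem_filter.mpr ⟨hS', hceq⟩
    have hle : RecovAPAux.Agr σ' π' ≤ RecovAPAux.Agr p₁.1 p₁.2 := hmax₁ _ hS1'
    have haeq : RecovAPAux.Agr σ' π' = RecovAPAux.Agr p₁.1 p₁.2 :=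
      le_antisymm hle (hagr_eq ▸ hf)
    have hS2' : (σ', π') ∈ ((Finset.univ.filter fun p : Equiv.Perm (Fin n) × Equiv.Perm (Fin n) =>
        k ≤ RecovAPAux.Agr p.1 p.2).filter
        (fun p => RecovAPAux.Cost A B p.1 p.2 = RecovAPAux.Cost A B p₀.1 p₀.2)).filter
        (fun p => RecovAPAux.Agr p.1 p.2 = RecovAPAux.Agr p₁.1 p₁.2) :=
      Finset.mem_filter.mpr ⟨hS1', haeq⟩
    exact absurd (hmin₂ _ hS2') (not_le.mpr hphi)
  have hdis : ∀ {i i' : Fin n}, i < i' → (σ⁻¹ * π) i = i' → σ i ≠ π i := by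
    intro i i' hii' hti h
    exact hii'.ne ((RecovAPAux.tau_fix h).symm.trans hti)
  refine ⟨σ, π, h0, ?_, RecovAPAux.tau_invol hA hB hmin, ?_, ?_, ?_⟩
  · intro σ' π' hfeas
    have hS' : (σ', π') ∈ Finset.univ.filter
        fun p : Equiv.Perm (Fin n) × Equiv.Perm (Fin n) => k ≤ RecovAPAux.Agr p.1 p.2 :=
      Finset.mem_filter.mpr ⟨Finset.mem_univ _, hfeas⟩
    exact le_trans (le_of_eq hcost_eq) (hmin₀ _ hS')
  · intro i i' hii' hti
    have hdi : σ i ≠ π i := hdis hii' hti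
    have hdi' : σ i' ≠ π i' := hti ▸ RecovAPAux.tau_disagree hdi
    exact RecovAPAux.mono_sigma hA hmin hii' hdi hdi'
  · intro i₁ i₁' i₂ i₂' h₁ h₂ ht₁ ht₂ hne
    have hd₁ : σ i₁ ≠ π i₁ := hdis h₁ ht₁
    have hd₁' : σ i₁' ≠ π i₁' := ht₁ ▸ RecovAPAux.tau_disagree hd₁
    have hd₂ : σ i₂ ≠ π i₂ := hdis h₂ ht₂
    have hd₂' : σ i₂' ≠ π i₂' := ht₂ ▸ RecovAPAux.tau_disagree hd₂
    rcases lt_trichotomy i₁ i₂ with h | h | h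
    · right
      have hord : i₂' < i₁' := by
        have := RecovAPAux.tau_anti hA hB hmin h hd₁ hd₂
        rwa [ht₁, ht₂] at this
      exact ⟨h, hord, RecovAPAux.mono_sigma hA hmin h hd₁ hd₂,
        RecovAPAux.mono_sigma hA hmin h₂ hd₂ hd₂',
        RecovAPAux.mono_sigma hA hmin hord hd₂' hd₁'⟩
    · exact (hne h).elim
    · left
      have hord : i₁' < i₂' := by
        have := RecovAPAux.tau_anti hA hB hmin h hd₂ hd₁
        rwa [ht₁, ht₂] at this
      exact ⟨h, hord, RecovAPAux.mono_sigma hA hmin h hd₂ hd₁,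
        RecovAPAux.mono_sigma hA hmin h₁ hd₁ hd₁',
        RecovAPAux.mono_sigma hA hmin hord hd₁' hd₂'⟩
  · intro x hx i i' hii' hti
    exact RecovAPAux.two_in_four hA hB hmin hx hii' hti
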